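/- Let p > 3 be prime and write r = 2 + n(p-1)p^t with t ≥ 0 and n ≥ 0. Then for all i ≥ 3 with i ≤ t+3, Σ_{0<j<r, j≡2 mod (p-1)} C(j,i)·C(r,j) ≡ 0 (mod p^{t+3-i}). -/

import Mathlib

private lemma five_pow_ge (e : ℕ) (he : 1 ≤ e) : e + 3 ≤ 5 ^ e := by
  induction e with
  | zero => omega
  | succ m ih =>
    rcases Nat.eq_or_lt_of_le he with h | h
    · simp [← h]
    · have hm : 1 ≤ m := by omega
      have := ih hm
      have : 5 ^ m ≤ 5 ^ (m+1) := Nat.pow_le_pow_right (by norm_num) (by omega)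
      omega

private lemma keyA (p n t r i : ℕ) (hp : p.Prime) (hp3 : 3 < p)
    (hr : r = 2 + n * (p - 1) * p^t) (h3 : 3 ≤ i) (hit : i ≤ t + 3) :
    p ^ (t + 3 - i) ∣ r.choose i := by
  rcases lt_or_ge r i with hlt | hir
  · rw [Nat.choose_eq_zero_of_lt hlt]; exact dvd_zero _
  -- p^t ∣ r - 2
  have hr2 : p ^ t ∣ r - 2 := by
    have : r - 2 = n * (p-1) * p^t := by omega
    rw [this]; exact dvd_mul_left _ _
  have h3r : 3 ≤ r := le_trans h3 hir
  -- descFactorial r 3 = (r-2) * ((r-1) * (r * 1))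
  have hdf : r.descFactorial 3 = (r - 2) * ((r - 1) * (r * 1)) := by
    simp [Nat.descFactorial]
  have hdvd6 : p ^ t ∣ 6 * r.choose 3 := by
    have : (6 : ℕ) = Nat.factorial 3 := by norm_num [Nat.factorial]
    rw [this, ← Nat.descFactorial_eq_factorial_mul_choose, hdf]
    exact Dvd.dvd.mul_right hr2 _
  have hp6 : Nat.Coprime (p ^ t) 6 := by
    apply Nat.Coprime.pow_left
    rw [Nat.coprime_comm]
    apply Nat.Coprime.symm
    rw [hp.coprime_iff_not_dvd]
    intro hd
    have h6 : p ≤ 6 := Nat.le_of_dvd (by norm_num) hd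
    interval_cases p <;> revert hp hd <;> decide
  have hdvd3 : p ^ t ∣ r.choose 3 := (Nat.Coprime.dvd_of_dvd_mul_left hp6 hdvd6)
  -- subset identity
  have hid : r.choose i * i.choose 3 = r.choose 3 * (r-3).choose (i-3) :=
    Nat.choose_mul h3
  have hdvdprod : p ^ t ∣ r.choose i * i.choose 3 := by
    rw [hid]; exact Dvd.dvd.mul_right hdvd3 _
  -- multiply by 6 : p^t ∣ choose r i * M with M = descFactorial i 3
  set M := i.descFactorial 3 with hM
  have hM0 : M ≠ 0 := by
    intro h0
    exact absurd (Nat.descFactorial_eq_zero_iff_lt.mp h0) (by omega)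
  have hdvdM : p ^ t ∣ r.choose i * M := by
    have : r.choose i * M = 6 * (r.choose i * i.choose 3) := by
      have h6 : (6 : ℕ) = Nat.factorial 3 := by norm_num [Nat.factorial]
      rw [hM, Nat.descFactorial_eq_factorial_mul_choose, ← h6]; ring
    rw [this]
    exact Dvd.dvd.mul_left hdvdprod 6
  set e := M.factorization p with he
  set u := M / p ^ e with hu
  have hMeu : p ^ e * u = M := Nat.ordProj_mul_ordCompl_eq_self M p
  have hpu : ¬ p ∣ u := Nat.not_dvd_ordCompl hp hM0
  -- e ≤ i - 3
  have hei : e ≤ i - 3 := by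
    by_cases hpM : p ∣ M
    · -- p divides exactly one of i, i-1, i-2; p^e divides that factor
      have hdfi : M = (i - 2) * ((i - 1) * (i * 1)) := by
        simp [hM, Nat.descFactorial]
      have hpe_le : p ^ e ≤ i := by
        have hpeM : p ^ e ∣ M := Nat.ordProj_dvd M p
        have hcop : ∀ m : ℕ, ¬ p ∣ m → Nat.Coprime (p ^ e) m := fun m hm =>
          Nat.Coprime.pow_left _ (hp.coprime_iff_not_dvd.mpr hm)
        have hone : ¬ (p ∣ i ∧ p ∣ (i-1)) ∧ ¬ (p ∣ i ∧ p ∣ (i-2)) ∧ ¬ (p ∣ (i-1) ∧ p ∣ (i-2)) := by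
          refine ⟨fun ⟨h1, h2⟩ => ?_, fun ⟨h1, h2⟩ => ?_, fun ⟨h1, h2⟩ => ?_⟩
          · have := Nat.dvd_sub h1 h2; rw [show i - (i-1) = 1 by omega] at this
            have := Nat.le_of_dvd one_pos this; omega
          · have := Nat.dvd_sub h1 h2; rw [show i - (i-2) = 2 by omega] at this
            have := Nat.le_of_dvd (by omega) this; omega
          · have := Nat.dvd_sub h1 h2; rw [show (i-1) - (i-2) = 1 by omega] at this
            have := Nat.le_of_dvd (by omega) this; omega
        rw [hdfi] at hpeM
        rcases (Nat.Prime.dvd_mul hp).mp (hdfi ▸ hpM) with h2 | hrest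
        · -- p ∣ i - 2, so coprime to (i-1)*(i*1)
          have hc : Nat.Coprime (p ^ e) ((i-1) * (i*1)) := by
            apply Nat.Coprime.mul_right
            · exact hcop _ (fun h => hone.2.2 ⟨h, h2⟩)
            · rw [Nat.mul_one]; exact hcop _ (fun h => hone.2.1 ⟨h, h2⟩)
          have : p ^ e ∣ i - 2 := (Nat.Coprime.dvd_of_dvd_mul_right hc) hpeM
          have := Nat.le_of_dvd (by omega) this; omega
        · rcases (Nat.Prime.dvd_mul hp).mp hrest with h1 | h0
          · have hc : Nat.Coprime (p ^ e) (i - 2) :=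
              hcop _ (fun h => hone.2.2 ⟨h1, h⟩)
            have hpeM' : p ^ e ∣ (i-1) * ((i-2) * (i*1)) := by
              rw [show (i-1) * ((i-2) * (i*1)) = (i-2)*((i-1)*(i*1)) by ring]; exact hpeM
            have hc2 : Nat.Coprime (p ^ e) ((i-2) * (i*1)) := by
              apply Nat.Coprime.mul_right hc
              rw [Nat.mul_one]; exact hcop _ (fun h => hone.1 ⟨h, h1⟩)
            have : p ^ e ∣ i - 1 := by
              have := (Nat.Coprime.dvd_of_dvd_mul_right hc2)
                (by rw [show (i-2)*((i-1)*(i*1)) = (i-1)*((i-2)*(i*1)) by ring] at hpeM; exact hpeM)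
              exact this
            have := Nat.le_of_dvd (by omega) this; omega
          · rw [Nat.mul_one] at h0
            have hc : Nat.Coprime (p ^ e) ((i-2) * (i-1)) := by
              apply Nat.Coprime.mul_right
              · exact hcop _ (fun h => hone.2.1 ⟨h0, h⟩)
              · exact hcop _ (fun h => hone.1 ⟨h0, h⟩)
            have : p ^ e ∣ i := by
              have := (Nat.Coprime.dvd_of_dvd_mul_right hc)
                (by rw [show (i-2)*((i-1)*(i*1)) = i*((i-2)*(i-1)) by ring] at hpeM; exact hpeM)
              exact this
            exact Nat.le_of_dvd (by omega) this
      by_cases he0 : e = 0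
      · omega
      · have h1e : 1 ≤ e := by omega
        have h5 : e + 3 ≤ 5 ^ e := five_pow_ge e h1e
        have hp5 : 5 ≤ p := by
          rcases Nat.lt_or_ge p 5 with hlt | hge
          · interval_cases p
            exact absurd hp (by norm_num)
          · exact hge
        have h5p : 5 ^ e ≤ p ^ e := Nat.pow_le_pow_left hp5 e
        have : e + 3 ≤ i := le_trans h5 (le_trans h5p hpe_le)
        omega
    · have : e = 0 := by
        rw [he, Nat.factorization_eq_zero_of_not_dvd hpM]
      omega
  have het : e ≤ t := by omega
  -- cancel p^e
  have hcan : p ^ (t - e) ∣ r.choose i * u := by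
    have h1 : p ^ (t - e) * p ^ e ∣ (r.choose i * u) * p ^ e := by
      rw [← pow_add, show t - e + e = t by omega,
        show r.choose i * u * p ^ e = r.choose i * (p ^ e * u) by ring, hMeu]
      exact hdvdM
    exact (Nat.mul_dvd_mul_iff_right (Nat.pow_pos (n := e) hp.pos)).mp h1
  have hcop : Nat.Coprime (p ^ (t - e)) u :=
    Nat.Coprime.pow_left _ (hp.coprime_iff_not_dvd.mpr hpu)
  have hfinal : p ^ (t - e) ∣ r.choose i := Nat.Coprime.dvd_of_dvd_mul_right hcop hcan
  exact dvd_trans (pow_dvd_pow p (by omega)) hfinal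

theorem stmt_10 (p n t r : ℕ) (hp : p.Prime) (hp3 : 3 < p)
    (hr : r = 2 + n * (p - 1) * p^t) :
    ∀ i : ℕ, 3 ≤ i → i ≤ t + 3 →
      (p : ℤ)^(t + 3 - i) ∣ ∑ j ∈ (Finset.Ioo 0 r).filter
        (fun j => j % (p - 1) = 2 % (p - 1)), (j.choose i : ℤ) * (r.choose j : ℤ) := by
  intro i h3 hit
  apply Finset.dvd_sum
  intro j hj
  rcases lt_or_ge j i with hji | hij
  · rw [Nat.choose_eq_zero_of_lt hji]
    simp
  · have hjr : j ≤ r := by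
      have := Finset.mem_filter.mp hj
      have := Finset.mem_Ioo.mp this.1
      omega
    have hkey : p ^ (t + 3 - i) ∣ r.choose i := keyA p n t r i hp hp3 hr h3 hit
    have hid : r.choose j * j.choose i = r.choose i * (r - i).choose (j - i) :=
      Nat.choose_mul hij
    have hdvd : p ^ (t + 3 - i) ∣ j.choose i * r.choose j := by
      rw [Nat.mul_comm, hid]
      exact Dvd.dvd.mul_right hkey _
    have := Int.natCast_dvd_natCast.mpr hdvd
    push_cast at this
    exact this
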